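/- arXiv:2101.05008 — 6 statements merged into one kernel-verified Lean document; each statement's English description precedes it below -/
import Mathlib

section
/- Let F(x) = exp(−d(1 − x^{r−1})) for d > 0 and integer r ≥ 3, and consider the fixed-point equation 1 − ρ = F(1 − ρ) on ρ ∈ [0,1). If d < 1/(r−1), then ρ = 0 is the only solution in [0,1). -/
/-- If `d < 1/(r-1)`, then `ρ = 0` is the only solution in `[0,1)` of the fixed-point
equation `1 - ρ = F(1 - ρ)` where `F(x) = exp(-d(1 - x^(r-1)))`. -/
theorem subcritical_fixed_point (r : ℕ) (hr : 3 ≤ r) (d : ℝ) (hd0 : 0 < d)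
    (hd : d < 1 / ((r : ℝ) - 1)) (ρ : ℝ) (h0 : 0 ≤ ρ) (h1 : ρ < 1)
    (hfix : 1 - ρ = Real.exp (-(d * (1 - (1 - ρ) ^ (r - 1))))) :
    ρ = 0 := by
  by_contra hne
  have hρ : 0 < ρ := lt_of_le_of_ne h0 (Ne.symm hne)
  set x := 1 - ρ with hx
  have hx0 : 0 < x := by simp [hx]; linarith
  have hx1 : x < 1 := by simp [hx]; linarith
  have hlog : Real.log x = -(d * (1 - x ^ (r - 1))) := by
    nth_rewrite 1 [hfix]
    exact Real.log_exp _
  have hlt : Real.log x < x - 1 := Real.log_lt_sub_one_of_pos hx0 (by linarith)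
  have hcast : ((r - 1 : ℕ) : ℝ) = (r : ℝ) - 1 := by
    have h1r : 1 ≤ r := by omega
    push_cast [h1r]; ring
  have hbern : 1 + ((r : ℝ) - 1) * (x - 1) ≤ x ^ (r - 1) := by
    have := one_add_mul_le_pow (a := x - 1) (by linarith) (r - 1)
    rw [hcast] at this
    simpa using this
  have hrp : (0 : ℝ) < (r : ℝ) - 1 := by
    have : (3:ℝ) ≤ (r:ℝ) := by exact_mod_cast hr
    linarith
  have hd' : d * ((r:ℝ) - 1) < 1 := by
    exact (lt_div_iff₀ hrp).mp hd
  nlinarith [mul_pos hd0 (sub_pos.mpr hx1), mul_le_mul_of_nonneg_left hbern hd0.le]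
end

section
/- Let F(x) = exp(−d(1 − x^{r−1})) for d > 0 and integer r ≥ 3. If d > 1/(r−1), then the fixed-point equation 1 − ρ = F(1 − ρ) has exactly one solution ρ in the open interval (0,1) (in addition to the trivial solution ρ = 0). -/
open Real Set

private lemma key_fixed_point (n : ℕ) (hn : 2 ≤ n) (d : ℝ) (hd : 1 / (n : ℝ) < d) :
    ∃! x : ℝ, x ∈ Ioo (0:ℝ) 1 ∧ Real.log x + d * (1 - x ^ n) = 0 := by
  have hn0 : (0:ℝ) < n := by positivity
  have hd0 : 0 < d := lt_trans (by positivity) hd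
  have hdn : 1 < d * n := by
    rw [div_lt_iff₀ hn0] at hd; linarith
  set f : ℝ → ℝ := fun x => Real.log x + d * (1 - x ^ n) with hf
  set f' : ℝ → ℝ := fun x => x⁻¹ + d * (-(n * x ^ (n - 1))) with hf'
  have hderiv : ∀ x : ℝ, 0 < x → HasDerivAt f (f' x) x := by
    intro x hx
    exact (Real.hasDerivAt_log hx.ne').add (((hasDerivAt_pow n x).const_sub 1).const_mul d)
  have hcont : ∀ a b : ℝ, 0 < a → ContinuousOn f (Icc a b) := by
    intro a b ha x hx
    exact ((hderiv x (lt_of_lt_of_le ha hx.1)).continuousAt).continuousWithinAt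
  have hxpow : ∀ x : ℝ, x * x ^ (n - 1) = x ^ n := by
    intro x
    rw [← pow_succ']
    congr 1; omega
  -- roots of f' are determined
  have hroot : ∀ c : ℝ, 0 < c → f' c = 0 → c ^ n = (d * n)⁻¹ := by
    intro c hc h
    have h1 : c * f' c = 0 := by rw [h]; ring
    have h2 : c * c⁻¹ = 1 := mul_inv_cancel₀ hc.ne'
    have h3 : c * (c ^ (n-1)) = c ^ n := hxpow c
    have h4 : d * n * c ^ n = 1 := by
      simp only [hf'] at h1
      nlinarith [h1, h2, h3]
    field_simp
    linarith
  have hf1 : f 1 = 0 := by simp [hf]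
  -- the point c where f' vanishes
  set c : ℝ := ((d * n)⁻¹) ^ ((n : ℝ)⁻¹) with hc
  have hdn_inv_pos : 0 < (d * n)⁻¹ := by positivity
  have hc0 : 0 < c := Real.rpow_pos_of_pos hdn_inv_pos _
  have hc1 : c < 1 := by
    apply Real.rpow_lt_one hdn_inv_pos.le
    · rw [inv_lt_one_iff₀]; right; exact hdn
    · positivity
  have hcn : c ^ n = (d * n)⁻¹ := by
    rw [← Real.rpow_natCast c n, hc, ← Real.rpow_mul hdn_inv_pos.le]
    rw [inv_mul_cancel₀ (by positivity : (n:ℝ) ≠ 0), Real.rpow_one]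
  set b : ℝ := (c + 1) / 2 with hb
  have hcb : c < b := by rw [hb]; linarith
  have hb0 : 0 < b := lt_trans hc0 hcb
  have hb1 : b < 1 := by rw [hb]; linarith
  -- f is strictly decreasing on [b, 1]
  have hanti : StrictAntiOn f (Icc b 1) := by
    apply strictAntiOn_of_deriv_neg (convex_Icc b 1) (hcont b 1 hb0)
    intro x hx
    rw [interior_Icc] at hx
    have hx0 : 0 < x := lt_trans hb0 hx.1
    rw [(hderiv x hx0).deriv]
    have hxn : (d * n)⁻¹ < x ^ n := by
      rw [← hcn]
      exact pow_lt_pow_left₀ (lt_trans hcb hx.1) hc0.le (by omega)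
    have h1 : 1 < d * n * x ^ n := by
      rw [inv_lt_iff_one_lt_mul₀ (by positivity)] at hxn
      linarith [hxn]
    have h2 : x * x⁻¹ = 1 := mul_inv_cancel₀ hx0.ne'
    have h3 : x * (x ^ (n-1)) = x ^ n := hxpow x
    simp only [hf']
    nlinarith [h1, h2, h3]
  have hfb : 0 < f b := by
    have := hanti ⟨le_refl b, hb1.le⟩ ⟨hb1.le, le_refl 1⟩ hb1
    rw [hf1] at this; exact this
  -- a point a with f a < 0
  set a : ℝ := min (Real.exp (-d - 1)) (b / 2) with ha
  have ha0 : 0 < a := lt_min (Real.exp_pos _) (by linarith)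
  have hab : a < b := lt_of_le_of_lt (min_le_right _ _) (by linarith)
  have hfa : f a < 0 := by
    have hla : Real.log a ≤ -d - 1 := by
      calc Real.log a ≤ Real.log (Real.exp (-d - 1)) :=
            Real.log_le_log ha0 (min_le_left _ _)
        _ = -d - 1 := Real.log_exp _
    have han : 0 < a ^ n := pow_pos ha0 n
    simp only [hf]
    nlinarith
  -- existence via IVT
  have hmem : (0:ℝ) ∈ Ioo (f a) (f b) := ⟨hfa, hfb⟩
  obtain ⟨x0, hx0, hfx0⟩ := intermediate_value_Ioo hab.le (hcont a b ha0) hmem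
  have hx0mem : x0 ∈ Ioo (0:ℝ) 1 := ⟨lt_trans ha0 hx0.1, lt_trans hx0.2 hb1⟩
  refine ⟨x0, ⟨hx0mem, hfx0⟩, ?_⟩
  -- uniqueness
  have huniq : ∀ x y : ℝ, x ∈ Ioo (0:ℝ) 1 → y ∈ Ioo (0:ℝ) 1 → f x = 0 → f y = 0 →
      x < y → False := by
    intro x y hx hy hfx hfy hxy
    obtain ⟨c1, hc1mem, hc1'⟩ := exists_hasDerivAt_eq_zero hxy
      (hcont x y hx.1) (hfx.trans hfy.symm)
      (fun z hz => hderiv z (lt_trans hx.1 hz.1))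
    obtain ⟨c2, hc2mem, hc2'⟩ := exists_hasDerivAt_eq_zero hy.2
      (hcont y 1 hy.1) (hfy.trans hf1.symm)
      (fun z hz => hderiv z (lt_trans hy.1 hz.1))
    have hc1pos : 0 < c1 := lt_trans hx.1 hc1mem.1
    have hc2pos : 0 < c2 := lt_trans hy.1 hc2mem.1
    have e1 := hroot c1 hc1pos hc1'
    have e2 := hroot c2 hc2pos hc2'
    have heq : c1 = c2 := by
      have h12 : c1 ^ n = c2 ^ n := e1.trans e2.symm
      exact (pow_left_strictMonoOn₀ (by omega : n ≠ 0)).injOn hc1pos.le hc2pos.le h12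
    have hlt : c1 < c2 := lt_trans hc1mem.2 hc2mem.1
    exact hlt.ne heq
  intro y ⟨hy, hfy⟩
  rcases lt_trichotomy y x0 with h | h | h
  · exact absurd (huniq y x0 hy hx0mem hfy hfx0 h) not_false
  · exact h
  · exact absurd (huniq x0 y hx0mem hy hfx0 hfy h) not_false

/-- If `d > 1/(r-1)`, then the fixed-point equation `1 - ρ = F(1 - ρ)` with
`F(x) = exp(-d(1 - x^(r-1)))` has exactly one solution `ρ` in the open interval `(0,1)`. -/
theorem supercritical_fixed_point (r : ℕ) (hr : 3 ≤ r) (d : ℝ) (hd0 : 0 < d)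
    (hd : 1 / ((r : ℝ) - 1) < d) :
    ∃! ρ : ℝ, ρ ∈ Set.Ioo (0 : ℝ) 1 ∧
      1 - ρ = Real.exp (-(d * (1 - (1 - ρ) ^ (r - 1)))) := by
  have hcast : ((r - 1 : ℕ) : ℝ) = (r : ℝ) - 1 := by
    rw [Nat.cast_sub (by omega)]; simp
  have hd' : 1 / ((r - 1 : ℕ) : ℝ) < d := by rw [hcast]; exact hd
  obtain ⟨x, ⟨hx, hfx⟩, huniq⟩ := key_fixed_point (r - 1) (by omega) d hd'
  refine ⟨1 - x, ⟨⟨by linarith [hx.2], by linarith [hx.1]⟩, ?_⟩, ?_⟩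
  · have h1 : (1 : ℝ) - (1 - x) = x := by ring
    have h2 : -(d * (1 - x ^ (r - 1))) = Real.log x := by linarith [hfx]
    rw [h1, h2, Real.exp_log hx.1]
  · intro ρ ⟨hρ, hρeq⟩
    have hx' : (1 - ρ) ∈ Ioo (0:ℝ) 1 := ⟨by linarith [hρ.2], by linarith [hρ.1]⟩
    have hfx' : Real.log (1 - ρ) + d * (1 - (1 - ρ) ^ (r - 1)) = 0 := by
      have := congrArg Real.log hρeq
      rw [Real.log_exp] at this
      linarith [this]
    have := huniq (1 - ρ) ⟨hx', hfx'⟩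
    linarith [this]
end

section
/- Let G be a bipartite factor graph with variable nodes V and factor nodes F, where every factor node has degree r. Define the peeling process: G₀ = G, and G_{i+1} is obtained from G_i by deleting all edges incident to nodes of degree exactly 1 in G_i. Then for every i ≥ 2, the number of variable nodes first disabled in round i is at most the number of factor nodes first disabled in round i−1, and the number of factor nodes first disabled in round i is at most the number of variable nodes first disabled in round i−1. (A node is disabled in round i if it has degree 1 in G_{i−1}.) -/
variable {V F : Type*} [DecidableEq V] [DecidableEq F] [Fintype V] [Fintype F]

/-- degree of a variable node `v` in the factor graph with edge set `E` -/
def degV (E : Finset (V × F)) (v : V) : ℕ := (E.filter (fun p => p.1 = v)).card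

/-- degree of a factor node `a` in the factor graph with edge set `E` -/
def degF (E : Finset (V × F)) (a : F) : ℕ := (E.filter (fun p => p.2 = a)).card

/-- one round of the peeling process: delete all edges incident to degree-1 nodes -/
def peel (E : Finset (V × F)) : Finset (V × F) :=
  E.filter (fun p => degV E p.1 ≠ 1 ∧ degF E p.2 ≠ 1)

lemma exV (E : Finset (V × F)) (v : V) (hv : degV (peel E) v = 1) :
    ∃ b : F, (v, b) ∈ E ∧ degF E b = 1 := by
  classical
  have h1 : ((peel E).filter (fun p => p.1 = v)).Nonempty := by
    rw [← Finset.card_pos]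
    unfold degV at hv; omega
  obtain ⟨p, hp⟩ := h1
  simp only [Finset.mem_filter, peel] at hp
  obtain ⟨⟨hpE, hdv, hdf⟩, hp1⟩ := hp
  rw [hp1] at hdv
  -- degV E v ≥ 2, but degV (peel E) v = 1, so the filters differ
  have hsub : (peel E).filter (fun p => p.1 = v) ⊆ E.filter (fun p => p.1 = v) :=
    Finset.filter_subset_filter _ (Finset.filter_subset _ _)
  have hlt : ((peel E).filter (fun p => p.1 = v)).card < (E.filter (fun p => p.1 = v)).card := by
    have hle := Finset.card_le_card hsub
    have : degV E v ≠ 1 := hdv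
    unfold degV at this hv
    omega
  have hns : ¬ (E.filter (fun p => p.1 = v) ⊆ (peel E).filter (fun p => p.1 = v)) := by
    intro h
    exact absurd (Finset.card_le_card h) (by omega)
  obtain ⟨q, hq, hqn⟩ := Finset.not_subset.mp hns
  simp only [Finset.mem_filter] at hq
  have hqnp : q ∉ peel E := fun h => hqn (Finset.mem_filter.mpr ⟨h, hq.2⟩)
  simp only [peel, Finset.mem_filter, not_and, not_not] at hqnp
  refine ⟨q.2, ?_, ?_⟩
  · rw [← hq.2]; exact hq.1
  · have h := hqnp hq.1
    rw [hq.2] at h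
    exact h hdv

lemma exF (E : Finset (V × F)) (a : F) (ha : degF (peel E) a = 1) :
    ∃ w : V, (w, a) ∈ E ∧ degV E w = 1 := by
  classical
  have h1 : ((peel E).filter (fun p => p.2 = a)).Nonempty := by
    rw [← Finset.card_pos]
    unfold degF at ha; omega
  obtain ⟨p, hp⟩ := h1
  simp only [Finset.mem_filter, peel] at hp
  obtain ⟨⟨hpE, hdv, hdf⟩, hp2⟩ := hp
  rw [hp2] at hdf
  have hsub : (peel E).filter (fun p => p.2 = a) ⊆ E.filter (fun p => p.2 = a) :=
    Finset.filter_subset_filter _ (Finset.filter_subset _ _)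
  have hlt : ((peel E).filter (fun p => p.2 = a)).card < (E.filter (fun p => p.2 = a)).card := by
    have hle := Finset.card_le_card hsub
    have : degF E a ≠ 1 := hdf
    unfold degF at this ha
    omega
  have hns : ¬ (E.filter (fun p => p.2 = a) ⊆ (peel E).filter (fun p => p.2 = a)) := by
    intro h
    exact absurd (Finset.card_le_card h) (by omega)
  obtain ⟨q, hq, hqn⟩ := Finset.not_subset.mp hns
  simp only [Finset.mem_filter] at hq
  have hqnp : q ∉ peel E := fun h => hqn (Finset.mem_filter.mpr ⟨h, hq.2⟩)
  simp only [peel, Finset.mem_filter, not_and, not_not] at hqnp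
  refine ⟨q.1, ?_, ?_⟩
  · rw [← hq.2]; exact hq.1
  · by_contra hne
    have h := hqnp hq.1 hne
    rw [hq.2] at h
    exact hdf h

lemma stepV (E : Finset (V × F)) :
    (Finset.univ.filter (fun v : V => degV (peel E) v = 1)).card
      ≤ (Finset.univ.filter (fun a : F => degF E a = 1)).card := by
  classical
  set S := Finset.univ.filter (fun v : V => degV (peel E) v = 1) with hS
  rcases S.eq_empty_or_nonempty with h | ⟨v0, hv0⟩
  · simp [h]
  · have hv0' : degV (peel E) v0 = 1 := (Finset.mem_filter.mp hv0).2
    obtain ⟨b0, _, _⟩ := exV E v0 hv0'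
    have : Nonempty F := ⟨b0⟩
    have hP : ∀ v ∈ S, ∃ b : F, (v, b) ∈ E ∧ degF E b = 1 := fun v hv =>
      exV E v (Finset.mem_filter.mp hv).2
    choose! f hf1 hf2 using hP
    apply Finset.card_le_card_of_injOn f
    · intro v hv
      simp only [Finset.mem_coe, Finset.mem_filter, Finset.mem_univ, true_and]
      exact hf2 v hv
    · intro v hv v' hv' heq
      have h1 := hf1 v hv
      have h2 := hf1 v' hv'
      have hd := hf2 v hv
      rw [heq] at h1
      have hcard : (E.filter (fun p => p.2 = f v')).card ≤ 1 := by
        unfold degF at hd; rw [heq] at hd; omega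
      have := Finset.card_le_one.mp hcard (v, f v') (Finset.mem_filter.mpr ⟨h1, rfl⟩)
        (v', f v') (Finset.mem_filter.mpr ⟨h2, rfl⟩)
      exact (Prod.mk.injEq _ _ _ _ ▸ this).1

lemma stepF (E : Finset (V × F)) :
    (Finset.univ.filter (fun a : F => degF (peel E) a = 1)).card
      ≤ (Finset.univ.filter (fun v : V => degV E v = 1)).card := by
  classical
  set S := Finset.univ.filter (fun a : F => degF (peel E) a = 1) with hS
  rcases S.eq_empty_or_nonempty with h | ⟨a0, ha0⟩
  · simp [h]
  · have ha0' : degF (peel E) a0 = 1 := (Finset.mem_filter.mp ha0).2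
    obtain ⟨w0, _, _⟩ := exF E a0 ha0'
    have : Nonempty V := ⟨w0⟩
    have hP : ∀ a ∈ S, ∃ w : V, (w, a) ∈ E ∧ degV E w = 1 := fun a ha =>
      exF E a (Finset.mem_filter.mp ha).2
    choose! f hf1 hf2 using hP
    apply Finset.card_le_card_of_injOn f
    · intro a ha
      simp only [Finset.mem_coe, Finset.mem_filter, Finset.mem_univ, true_and]
      exact hf2 a ha
    · intro a ha a' ha' heq
      have h1 := hf1 a ha
      have h2 := hf1 a' ha'
      have hd := hf2 a ha
      rw [heq] at h1
      have hcard : (E.filter (fun p => p.1 = f a')).card ≤ 1 := by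
        unfold degV at hd; rw [heq] at hd; omega
      have := Finset.card_le_one.mp hcard (f a', a) (Finset.mem_filter.mpr ⟨h1, rfl⟩)
        (f a', a') (Finset.mem_filter.mpr ⟨h2, rfl⟩)
      exact (Prod.mk.injEq _ _ _ _ ▸ this).2

/-- In the peeling process on a bipartite factor graph in which every factor node has
degree `r`, for every `i ≥ 2` the number of variable nodes disabled in round `i` (i.e.\ of
degree 1 in `G_{i-1}`) is at most the number of factor nodes disabled in round `i-1`, and
vice versa. -/
theorem peeling_disabled_bound (r : ℕ) (hr : 3 ≤ r) (E0 : Finset (V × F))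
    (hreg : ∀ a : F, degF E0 a = r) (i : ℕ) (hi : 2 ≤ i) :
    (Finset.univ.filter (fun v : V => degV (peel^[i - 1] E0) v = 1)).card
      ≤ (Finset.univ.filter (fun a : F => degF (peel^[i - 2] E0) a = 1)).card ∧
    (Finset.univ.filter (fun a : F => degF (peel^[i - 1] E0) a = 1)).card
      ≤ (Finset.univ.filter (fun v : V => degV (peel^[i - 2] E0) v = 1)).card := by
  obtain ⟨k, rfl⟩ : ∃ k, i = k + 2 := ⟨i - 2, by omega⟩
  have h1 : k + 2 - 1 = k + 1 := by omega
  have h2 : k + 2 - 2 = k := by omega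
  rw [h1, h2, Function.iterate_succ_apply']
  exact ⟨stepV _, stepF _⟩
end

section
/- Let T be a rooted tree of depth at most ℓ+1 rooted at w. Run the following deletion process: for i = 1,…,ℓ, delete every node at depth ℓ+1−i that has no surviving child at depth ℓ+2−i (nodes at depth ℓ+1 always survive). If the number of surviving children of the root w is j ≥ 2, then after ℓ rounds of the peeling process (deleting edges at degree-1 nodes) applied to T, the root w still has degree at least j. -/
variable {V : Type*} [DecidableEq V] [Fintype V]

/-- degree of `v` in the graph with edge set `E` (edges are 2-element vertex sets) -/
def gdeg (E : Finset (Finset V)) (v : V) : ℕ := (E.filter (fun e => v ∈ e)).card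

/-- one round of the peeling process: delete all edges incident to degree-1 nodes -/
def gpeel (E : Finset (Finset V)) : Finset (Finset V) :=
  E.filter (fun e => ∀ v ∈ e, gdeg E v ≠ 1)

/-- A node `v` of the tree with parent map `T` and depth function `dep` survives the
bottom-up deletion process `CoreConstruct` (with parameter `ℓ`) iff it has a descendant
at depth exactly `ℓ+1`. -/
def Surv (T : V → V) (dep : V → ℕ) (ℓ : ℕ) (v : V) : Prop :=
  ∃ x, dep x = ℓ + 1 ∧ ∃ k, T^[k] x = v

lemma gdeg_ne_one {E : Finset (Finset V)} {v : V} {e₁ e₂ : Finset V}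
    (h1 : e₁ ∈ E) (h2 : e₂ ∈ E) (hv1 : v ∈ e₁) (hv2 : v ∈ e₂) (hne : e₁ ≠ e₂) :
    gdeg E v ≠ 1 := by
  have : 1 < gdeg E v := by
    apply Finset.one_lt_card.mpr
    exact ⟨e₁, Finset.mem_filter.mpr ⟨h1, hv1⟩, e₂, Finset.mem_filter.mpr ⟨h2, hv2⟩, hne⟩
  omega

/-- Lower bound of Lemma 6.2: in a rooted tree of depth at most `ℓ+1` (given by a parent
map `T` and depth function `dep`, rooted at `w`, with edge set `{v, T v}` for `v ≠ w`),
if the number `j` of children of the root surviving `CoreConstruct` satisfies `j ≥ 2`,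
then after `ℓ` rounds of the peeling process the root `w` still has degree at least `j`. -/
theorem coreconstruct_lower_bound (T : V → V) (w : V) (dep : V → ℕ) (ℓ : ℕ)
    (hroot : T w = w) (hdepw : dep w = 0)
    (hdep : ∀ v, v ≠ w → dep (T v) + 1 = dep v)
    (hreach : ∀ v, T^[dep v] v = w)
    (hbound : ∀ v, dep v ≤ ℓ + 1)
    (j : ℕ)
    (hj : j = Set.ncard {v : V | v ≠ w ∧ T v = w ∧ Surv T dep ℓ v})
    (hj2 : 2 ≤ j) :
    j ≤ gdeg (gpeel^[ℓ]
        (Finset.image (fun v => {v, T v}) (Finset.univ.filter (· ≠ w)))) w := by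
  set E₀ : Finset (Finset V) :=
    Finset.image (fun v => {v, T v}) (Finset.univ.filter (· ≠ w)) with hE₀
  set S : Set V := {v : V | v ≠ w ∧ T v = w ∧ Surv T dep ℓ v} with hSdef
  have hSfin : S.Finite := Set.toFinite S
  -- surviving passes to parent
  have survT : ∀ v, Surv T dep ℓ v → Surv T dep ℓ (T v) := by
    rintro v ⟨x, hx, k, hk⟩
    exact ⟨x, hx, k + 1, by rw [Function.iterate_succ_apply', hk]⟩
  -- a surviving node of depth ≤ ℓ has a surviving child
  have child : ∀ v, Surv T dep ℓ v → dep v ≤ ℓ → ∃ y, T y = v ∧ Surv T dep ℓ y := by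
    rintro v ⟨x, hx, k, hk⟩ hdv
    rcases k with _ | m
    · simp only [Function.iterate_zero, id] at hk
      subst hk; omega
    · rw [Function.iterate_succ_apply'] at hk
      exact ⟨T^[m] x, hk, x, hx, m, rfl⟩
  -- base membership
  have base : ∀ x : V, x ≠ w → ({x, T x} : Finset V) ∈ E₀ := by
    intro x hx
    exact Finset.mem_image.mpr ⟨x, Finset.mem_filter.mpr ⟨Finset.mem_univ x, hx⟩, rfl⟩
  -- two distinct children of the root
  obtain ⟨c₁, c₂, hc₁, hc₂, hcne⟩ : ∃ a b, a ∈ S ∧ b ∈ S ∧ a ≠ b := by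
    have h1 : 1 < S.ncard := by omega
    rw [Set.one_lt_ncard_iff hSfin] at h1
    exact h1
  -- key invariant
  have key : ∀ i, i ≤ ℓ → ∀ x, x ≠ w → Surv T dep ℓ x → dep x + i ≤ ℓ + 1 →
      ({x, T x} : Finset V) ∈ gpeel^[i] E₀ := by
    intro i
    induction i with
    | zero => intro _ x hx _ _; simpa using base x hx
    | succ i ih =>
      intro hi x hx hs hd
      have hiℓ : i ≤ ℓ := by omega
      have hdx : dep (T x) + 1 = dep x := hdep x hx
      rw [Function.iterate_succ_apply']
      apply Finset.mem_filter.mpr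
      refine ⟨ih hiℓ x hx hs (by omega), ?_⟩
      intro v hv
      -- get a surviving child y of x
      obtain ⟨y, hyT, hys⟩ := child x hs (by omega)
      have hyw : y ≠ w := by
        intro h; rw [h, hroot] at hyT; exact hx hyT.symm
      have hdy : dep y = dep x + 1 := by
        have := hdep y hyw; rw [hyT] at this; omega
      have hey : ({y, T y} : Finset V) ∈ gpeel^[i] E₀ :=
        ih hiℓ y hyw hys (by omega)
      have hex : ({x, T x} : Finset V) ∈ gpeel^[i] E₀ :=
        ih hiℓ x hx hs (by omega)
      rcases Finset.mem_insert.mp hv with rfl | hv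
      · -- v = x : edges {y,x} and {x,Tx}
        refine gdeg_ne_one hey hex ?_ ?_ ?_
        · rw [hyT]; exact Finset.mem_insert_of_mem (Finset.mem_singleton_self _)
        · exact Finset.mem_insert_self _ _
        · intro h
          have hy2 : y ∈ ({v, T v} : Finset V) := by
            rw [← h]; exact Finset.mem_insert_self _ _
          rcases Finset.mem_insert.mp hy2 with h' | h'
          · rw [h'] at hdy; omega
          · rw [Finset.mem_singleton] at h'
            rw [h'] at hdy; omega
      · -- v = T x
        rw [Finset.mem_singleton] at hv
        subst hv
        by_cases hTx : T x = w
        · -- use the two surviving children of w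
          have mem : ∀ c, c ∈ S → ({c, w} : Finset V) ∈ gpeel^[i] E₀ := by
            rintro c ⟨hcw, hcT, hcs⟩
            have hdc : dep c = 1 := by have := hdep c hcw; rw [hcT] at this; omega
            have := ih hiℓ c hcw hcs (by omega)
            rwa [hcT] at this
          have hwm : ∀ c : V, w ∈ ({c, w} : Finset V) :=
            fun c => Finset.mem_insert_of_mem (Finset.mem_singleton_self _)
          rw [hTx]
          refine gdeg_ne_one (mem c₁ hc₁) (mem c₂ hc₂) (hwm c₁) (hwm c₂) ?_
          intro h
          have : c₁ ∈ ({c₂, w} : Finset V) := by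
            rw [← h]; exact Finset.mem_insert_self _ _
          rcases Finset.mem_insert.mp this with h' | h'
          · exact hcne h'
          · exact hc₁.1 (Finset.mem_singleton.mp h')
        · -- T x ≠ w : edges {x, Tx} and {Tx, T²x}
          have hdTx : dep (T (T x)) + 1 = dep (T x) := hdep _ hTx
          have hp : ({T x, T (T x)} : Finset V) ∈ gpeel^[i] E₀ :=
            ih hiℓ (T x) hTx (survT x hs) (by omega)
          refine gdeg_ne_one hex hp
            (Finset.mem_insert_of_mem (Finset.mem_singleton_self _))
            (Finset.mem_insert_self _ _) ?_
          intro h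
          have : x ∈ ({T x, T (T x)} : Finset V) := by
            rw [← h]; exact Finset.mem_insert_self _ _
          rcases Finset.mem_insert.mp this with h' | h'
          · rw [← h'] at hdx; omega
          · rw [Finset.mem_singleton] at h'
            rw [← h'] at hdTx; omega
  -- conclude
  rw [hj, Set.ncard_eq_toFinset_card _ hSfin]
  unfold gdeg
  apply Finset.card_le_card_of_injOn (fun c => ({c, w} : Finset V))
  · intro c hc
    rw [Finset.mem_coe, Set.Finite.mem_toFinset] at hc
    obtain ⟨hcw, hcT, hcs⟩ := hc
    have hdc : dep c = 1 := by have := hdep c hcw; rw [hcT] at this; omega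
    apply Finset.mem_filter.mpr
    constructor
    · have := key ℓ le_rfl c hcw hcs (by omega)
      rwa [hcT] at this
    · exact Finset.mem_insert_of_mem (Finset.mem_singleton_self _)
  · intro c₁' h₁ c₂' h₂ h
    simp only [Finset.mem_coe, Set.Finite.mem_toFinset] at h₁
    simp only at h
    have : c₁' ∈ ({c₂', w} : Finset V) := by
      rw [← h]; exact Finset.mem_insert_self _ _
    rcases Finset.mem_insert.mp this with h' | h'
    · exact h'
    · exact absurd (Finset.mem_singleton.mp h') h₁.1
end

section
/- Let T be a rooted tree of depth at most ℓ+1 rooted at w, and run the bottom-up deletion process of the previous statement (CoreConstruct). If a node v is deleted in round i of CoreConstruct, then v is disabled by round i (i.e., becomes isolated within at most i rounds) of the peeling process applied to T. Consequently the degree of w after ℓ rounds of peeling is at most the number of surviving children of w in CoreConstruct. -/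
variable {V : Type*} [DecidableEq V] [Fintype V]

lemma gpeel_subset (E : Finset (Finset V)) : gpeel E ⊆ E := Finset.filter_subset _ _

lemma gdeg_mono {E E' : Finset (Finset V)} (h : E' ⊆ E) (v : V) : gdeg E' v ≤ gdeg E v :=
  Finset.card_le_card (Finset.filter_subset_filter _ h)

lemma gdeg_eq_zero_iff {E : Finset (Finset V)} {v : V} :
    gdeg E v = 0 ↔ ∀ e ∈ E, v ∉ e := by
  simp [gdeg, Finset.card_eq_zero, Finset.filter_eq_empty_iff]

lemma iterate_mem {E : Finset (Finset V)} {i : ℕ} : gpeel^[i] E ⊆ E := by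
  induction i with
  | zero => exact subset_rfl
  | succ i ih =>
    rw [Function.iterate_succ_apply']
    exact (gpeel_subset _).trans ih

lemma key (T : V → V) (w : V) (dep : V → ℕ) (ℓ : ℕ)
    (hdep : ∀ v, v ≠ w → dep (T v) + 1 = dep v)
    (hbound : ∀ v, dep v ≤ ℓ + 1) :
    ∀ i, ∀ v, v ≠ w → ¬ Surv T dep ℓ v → ℓ + 1 - i ≤ dep v →
      gdeg (gpeel^[i] (Finset.image (fun u => ({u, T u} : Finset V))
        (Finset.univ.filter (· ≠ w)))) v = 0 := by
  set E0 : Finset (Finset V) :=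
    Finset.image (fun u => ({u, T u} : Finset V)) (Finset.univ.filter (· ≠ w)) with hE0
  have memE0 : ∀ e ∈ E0, ∃ u, u ≠ w ∧ e = ({u, T u} : Finset V) := by
    intro e he
    simp only [hE0, Finset.mem_image, Finset.mem_filter, Finset.mem_univ, true_and] at he
    obtain ⟨u, hu, he⟩ := he
    exact ⟨u, hu, he.symm⟩
  intro i
  induction i with
  | zero =>
    intro v hv hS hd
    simp only [Nat.sub_zero] at hd
    exact absurd ⟨v, le_antisymm (hbound v) hd, 0, rfl⟩ hS
  | succ i ih =>
    intro v hv hS hd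
    by_cases hcase : ℓ + 1 - i ≤ dep v
    · have h0 := ih v hv hS hcase
      have : gdeg (gpeel^[i+1] E0) v ≤ gdeg (gpeel^[i] E0) v := by
        refine gdeg_mono ?_ v
        rw [Function.iterate_succ_apply']
        exact gpeel_subset _
      omega
    -- child edges are gone
    have hchild : ∀ u, u ≠ w → T u = v → gdeg (gpeel^[i] E0) u = 0 := by
      intro u hu hTu
      refine ih u hu ?_ ?_
      · rintro ⟨x, hx, k, hk⟩
        exact hS ⟨x, hx, k + 1, by rw [Function.iterate_succ_apply', hk, hTu]⟩
      · have := hdep u hu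
        rw [hTu] at this
        omega
    -- edges containing v in round i are at most {v, T v}
    have hsub : (gpeel^[i] E0).filter (fun e => v ∈ e) ⊆ {({v, T v} : Finset V)} := by
      intro e he
      rw [Finset.mem_filter] at he
      obtain ⟨heE, hve⟩ := he
      obtain ⟨u, hu, rfl⟩ := memE0 e (iterate_mem heE)
      rcases Finset.mem_insert.1 hve with h | h
      · subst h; exact Finset.mem_singleton_self _
      · rw [Finset.mem_singleton] at h
        exfalso
        have h0 := hchild u hu h.symm
        rw [gdeg_eq_zero_iff] at h0
        exact h0 _ heE (Finset.mem_insert_self _ _)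
    rw [Function.iterate_succ_apply', gdeg_eq_zero_iff]
    intro e he hve
    rw [gpeel, Finset.mem_filter] at he
    obtain ⟨heE, hpe⟩ := he
    refine hpe v hve ?_
    have h1 : 1 ≤ gdeg (gpeel^[i] E0) v :=
      Finset.card_pos.2 ⟨e, Finset.mem_filter.2 ⟨heE, hve⟩⟩
    have h2 : gdeg (gpeel^[i] E0) v ≤ 1 := by
      have := Finset.card_le_card hsub
      simpa [gdeg] using this
    omega

/-- Upper bound of Lemma 6.2: in a rooted tree of depth at most `ℓ+1`, every node `v`
deleted in round `i = ℓ+1 - dep v` of `CoreConstruct` (i.e.\ a non-root node of depth in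
`[1,ℓ]` with no descendant at depth `ℓ+1`) is disabled (isolated) within `i` rounds of
the peeling process; consequently the degree of the root `w` after `ℓ` rounds of peeling
is at most the number of children of `w` surviving `CoreConstruct`. -/
theorem coreconstruct_upper_bound (T : V → V) (w : V) (dep : V → ℕ) (ℓ : ℕ)
    (hroot : T w = w) (hdepw : dep w = 0)
    (hdep : ∀ v, v ≠ w → dep (T v) + 1 = dep v)
    (hreach : ∀ v, T^[dep v] v = w)
    (hbound : ∀ v, dep v ≤ ℓ + 1) :
    (∀ v : V, v ≠ w → 1 ≤ dep v → dep v ≤ ℓ → ¬ Surv T dep ℓ v →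
      gdeg (gpeel^[ℓ + 1 - dep v]
        (Finset.image (fun u => {u, T u}) (Finset.univ.filter (· ≠ w)))) v = 0) ∧
    gdeg (gpeel^[ℓ]
        (Finset.image (fun u => {u, T u}) (Finset.univ.filter (· ≠ w)))) w
      ≤ Set.ncard {v : V | v ≠ w ∧ T v = w ∧ Surv T dep ℓ v} := by
  classical
  have hkey := key T w dep ℓ hdep hbound
  constructor
  · intro v hv h1 h2 hS
    exact hkey (ℓ + 1 - dep v) v hv hS (by omega)
  · set E0 : Finset (Finset V) :=
      Finset.image (fun u => ({u, T u} : Finset V)) (Finset.univ.filter (· ≠ w)) with hE0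
    set Sf : Finset V :=
      Finset.univ.filter (fun v => v ≠ w ∧ T v = w ∧ Surv T dep ℓ v) with hSf
    have hset : {v : V | v ≠ w ∧ T v = w ∧ Surv T dep ℓ v} = ↑Sf := by
      ext v; simp [hSf]
    rw [hset, Set.ncard_coe_finset]
    have hsub : (gpeel^[ℓ] E0).filter (fun e => w ∈ e) ⊆
        Sf.image (fun u => ({u, w} : Finset V)) := by
      intro e he
      rw [Finset.mem_filter] at he
      obtain ⟨heE, hwe⟩ := he
      have heE0 := iterate_mem heE
      simp only [hE0, Finset.mem_image, Finset.mem_filter, Finset.mem_univ, true_and] at heE0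
      obtain ⟨u, hu, rfl⟩ := heE0
      have hTu : T u = w := by
        rcases Finset.mem_insert.1 hwe with h | h
        · exact absurd h.symm hu
        · exact (Finset.mem_singleton.1 h).symm
      have hSurv : Surv T dep ℓ u := by
        by_contra hS
        have h0 := hkey ℓ u hu hS (by have := hdep u hu; rw [hTu, hdepw] at this; omega)
        rw [gdeg_eq_zero_iff] at h0
        exact h0 _ heE (Finset.mem_insert_self _ _)
      refine Finset.mem_image.2 ⟨u, ?_, by rw [hTu]⟩
      simp [hSf, hu, hTu, hSurv]
    calc gdeg (gpeel^[ℓ] E0) w ≤ (Sf.image (fun u => ({u, w} : Finset V))).card :=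
          Finset.card_le_card hsub
      _ ≤ Sf.card := Finset.card_image_le
end

section
/- Fix integer r ≥ 3 and real ε with 0 < ε small. Let d = (1+ε)/(r−1) and let ρ = ρ(ε) ∈ (0,1) be the unique positive solution of 1 − ρ = exp(−d(1 − (1−ρ)^{r−1})). Then as ε → 0⁺, ρ = 2ε/(r−1) + O(ε²), and consequently ρ̂ := 1 − (1−ρ)^{r−1} = 2ε + O(ε²). -/
set_option maxHeartbeats 1000000

lemma nn1 (k : ℕ) : (0:ℝ) ≤ (k:ℝ) * ((k:ℝ) - 1) := by
  rcases k with _ | m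
  · norm_num
  · push_cast; nlinarith [Nat.cast_nonneg (α := ℝ) m, sq_nonneg ((m:ℝ))]

lemma nn2 (k : ℕ) : (0:ℝ) ≤ (k:ℝ) * ((k:ℝ) - 1) * ((k:ℝ) - 2) := by
  rcases k with _ | _ | m
  · norm_num
  · norm_num
  · push_cast; nlinarith [Nat.cast_nonneg (α := ℝ) m, sq_nonneg ((m:ℝ))]

lemma pow_one_sub_le (n : ℕ) (x : ℝ) (h0 : 0 ≤ x) (h1 : x ≤ 1) :
    (1 - x) ^ n ≤ 1 - n * x + ((n:ℝ) * ((n:ℝ) - 1) / 2) * x ^ 2 := by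
  induction n with
  | zero => norm_num
  | succ k ih =>
    have hx : 0 ≤ 1 - x := by linarith
    have h3 : (1 - x) * (1 - x) ^ k ≤
        (1 - x) * (1 - (k:ℝ) * x + ((k:ℝ) * ((k:ℝ) - 1) / 2) * x ^ 2) :=
      mul_le_mul_of_nonneg_left ih hx
    have hpow : (1 - x) ^ (k + 1) = (1 - x) * (1 - x) ^ k := by ring
    have hk := nn1 k
    push_cast
    nlinarith [mul_nonneg (mul_nonneg hk h0) (mul_nonneg h0 h0)]

lemma le_pow_one_sub (n : ℕ) (x : ℝ) (h0 : 0 ≤ x) (h1 : x ≤ 1) :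
    1 - n * x + ((n:ℝ) * ((n:ℝ) - 1) / 2) * x ^ 2
      - ((n:ℝ) * ((n:ℝ) - 1) * ((n:ℝ) - 2) / 6) * x ^ 3 ≤ (1 - x) ^ n := by
  induction n with
  | zero => norm_num
  | succ k ih =>
    have hx : 0 ≤ 1 - x := by linarith
    have h3 : (1 - x) * (1 - (k:ℝ) * x + ((k:ℝ) * ((k:ℝ) - 1) / 2) * x ^ 2
        - ((k:ℝ) * ((k:ℝ) - 1) * ((k:ℝ) - 2) / 6) * x ^ 3) ≤ (1 - x) * (1 - x) ^ k :=
      mul_le_mul_of_nonneg_left ih hx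
    have hpow : (1 - x) ^ (k + 1) = (1 - x) * (1 - x) ^ k := by ring
    have hk := nn2 k
    push_cast
    nlinarith [mul_nonneg (mul_nonneg hk h0) (mul_nonneg (mul_nonneg h0 h0) h0)]

lemma exp_neg_quad (t : ℝ) (h0 : 0 ≤ t) (h1 : t ≤ 1) :
    |Real.exp (-t) - (1 - t + t ^ 2 / 2)| ≤ (2/9) * t ^ 3 := by
  have hx : |(-t)| ≤ 1 := by rw [abs_neg, abs_of_nonneg h0]; exact h1
  have h := Real.exp_bound hx (n := 3) (by norm_num)
  have hsum : ∑ m ∈ Finset.range 3, (-t) ^ m / (m.factorial : ℝ)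
      = 1 - t + t ^ 2 / 2 := by
    simp [Finset.sum_range_succ, Nat.factorial]
    ring
  rw [hsum] at h
  have habs : |(-t)| = t := by rw [abs_neg, abs_of_nonneg h0]
  rw [habs] at h
  calc |Real.exp (-t) - (1 - t + t ^ 2 / 2)| ≤ t ^ 3 * ((3:ℕ).succ / ((3:ℕ).factorial * 3)) := h
    _ ≤ (2/9) * t ^ 3 := by norm_num [Nat.factorial]; linarith

lemma aux_apriori (t ρ ε : ℝ) (hε : 0 < ε) (hρ0 : 0 < ρ)
    (ht0 : 0 ≤ t) (ht55 : t ≤ 11/20) (hρt : ρ ≤ t) (ht_le : t ≤ (1 + ε) * ρ)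
    (hexl : -(2/9 * t ^ 3) ≤ 1 - ρ - (1 - t + t ^ 2 / 2)) :
    ρ ≤ 3 * ε := by
  have key1 : ρ ≤ t - t ^ 2 / 3 := by
    nlinarith [mul_nonneg (by linarith : (0:ℝ) ≤ 11/20 - t) (sq_nonneg t)]
  nlinarith [mul_le_mul hρt hρt hρ0.le ht0, key1, ht_le, hρ0]

lemma aux_m4 (N t ρ ε : ℝ) (hN2 : 2 ≤ N) (hε : 0 < ε) (hε20 : ε ≤ 1/20)
    (hρ0 : 0 < ρ) (hρ3 : ρ ^ 3 ≤ 9 * ε ^ 2 * ρ)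
    (hD2 : N * t ≤ (1 + ε) * (N * ρ - (N * (N - 1) / 2) * ρ ^ 2
        + (N * (N - 1) * (N - 2) / 6) * ρ ^ 3)) :
    N * t - (1 + ε) * (N * ρ - (N * (N - 1) / 2) * ρ ^ 2)
      ≤ (81/50) * N ^ 3 * ε ^ 2 * ρ := by
  have hN0 : (0:ℝ) < N := by linarith
  have hco : N * (N - 1) * (N - 2) ≤ N ^ 3 := by nlinarith
  have hcn : 0 ≤ N * (N - 1) * (N - 2) :=
    mul_nonneg (mul_nonneg hN0.le (by linarith)) (by linarith)
  have step1 : N * t - (1 + ε) * (N * ρ - (N * (N - 1) / 2) * ρ ^ 2)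
      ≤ (1 + ε) * ((N * (N - 1) * (N - 2) / 6) * ρ ^ 3) := by linarith
  have step2 : (1 + ε) * ((N * (N - 1) * (N - 2) / 6) * ρ ^ 3)
      ≤ (21/20) * ((N * (N - 1) * (N - 2) / 6) * ρ ^ 3) := by
    nlinarith [mul_nonneg (by linarith : (0:ℝ) ≤ 1/20 - ε)
      (mul_nonneg hcn (pow_nonneg hρ0.le 3))]
  have step3 : (21/20) * ((N * (N - 1) * (N - 2) / 6) * ρ ^ 3)
      ≤ (21/120) * N ^ 3 * ρ ^ 3 := by
    nlinarith [mul_nonneg (by linarith : (0:ℝ) ≤ N ^ 3 - N * (N - 1) * (N - 2))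
      (pow_nonneg hρ0.le 3)]
  have step4 : (21/120) * N ^ 3 * ρ ^ 3 ≤ (81/50) * N ^ 3 * ε ^ 2 * ρ := by
    have hN3 : (0:ℝ) < N ^ 3 := pow_pos hN0 3
    have h := mul_le_mul_of_nonneg_left hρ3 (le_of_lt (by linarith : (0:ℝ) < (21/120) * N ^ 3))
    nlinarith [h]
  linarith

lemma aux_central (N t ρ ε : ℝ) (hN2 : 2 ≤ N) (hε : 0 < ε) (hε20 : ε ≤ 1/20)
    (hNε : N * ε ≤ 1/10) (hρ0 : 0 < ρ) (hρ3ε : ρ ≤ 3 * ε)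
    (ht0 : 0 ≤ t) (hρt : ρ ≤ t) (ht_le : t ≤ (1 + ε) * ρ)
    (hD1 : (1 + ε) * (N * ρ - (N * (N - 1) / 2) * ρ ^ 2) ≤ N * t)
    (hD2 : N * t ≤ (1 + ε) * (N * ρ - (N * (N - 1) / 2) * ρ ^ 2
        + (N * (N - 1) * (N - 2) / 6) * ρ ^ 3))
    (hexl : -(2/9 * t ^ 3) ≤ 1 - ρ - (1 - t + t ^ 2 / 2))
    (hexu : 1 - ρ - (1 - t + t ^ 2 / 2) ≤ 2/9 * t ^ 3) :
    N * ε - N ^ 2 / 2 * ρ ≤ 8 * N ^ 3 * ε ^ 2 ∧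
    N ^ 2 / 2 * ρ - N * ε ≤ 8 * N ^ 3 * ε ^ 2 := by
  have hN0 : (0:ℝ) < N := by linarith
  have hρ2 : ρ ^ 2 ≤ 9 * ε ^ 2 := by nlinarith
  have hNρ : N * ρ ≤ 3/10 := by nlinarith
  -- lower bound on t
  have hP2 : N * (ρ - (3/5) * N * ρ ^ 2) ≤ N * t := by
    nlinarith [mul_nonneg (mul_nonneg hε.le hN0.le) hρ0.le,
      mul_nonneg (mul_nonneg hN0.le hρ0.le) hρ0.le,
      mul_nonneg hε.le (mul_nonneg (mul_nonneg hN0.le hρ0.le) hρ0.le)]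
  have hρt2 : ρ - (3/5) * N * ρ ^ 2 ≤ t := le_of_mul_le_mul_left hP2 hN0
  have hlow0 : 0 ≤ ρ - (3/5) * N * ρ ^ 2 := by nlinarith
  -- t^2 bounds
  have hts_ub : t ^ 2 ≤ ρ ^ 2 + (21/10) * ε * ρ ^ 2 := by
    nlinarith [mul_le_mul ht_le ht_le ht0 (by positivity : (0:ℝ) ≤ (1 + ε) * ρ),
      mul_nonneg (by linarith : (0:ℝ) ≤ 1/20 - ε) (mul_nonneg hε.le (sq_nonneg ρ))]
  have hts_lb : ρ ^ 2 - (6/5) * N * ρ ^ 3 ≤ t ^ 2 := by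
    have h := mul_le_mul hρt2 hρt2 hlow0 ht0
    have h2 := sq_nonneg (N * ρ ^ 2)
    nlinarith [h, h2]
  -- t^3 bound
  have ht3 : t ^ 3 ≤ (29/25) * ρ ^ 3 := by
    nlinarith [pow_le_pow_left₀ ht0 ht_le 3, pow_nonneg hρ0.le 3,
      mul_nonneg hε.le (pow_nonneg hρ0.le 3),
      mul_nonneg (mul_nonneg hε.le hε.le) (pow_nonneg hρ0.le 3)]
  -- monomial bounds
  have hρ3 : ρ ^ 3 ≤ 9 * ε ^ 2 * ρ := by nlinarith
  have m1 : ε * (N * (N - 1) / 2) * ρ ^ 2 ≤ (3/2) * N ^ 2 * ε ^ 2 * ρ := by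
    nlinarith [mul_nonneg (mul_nonneg hε.le hN0.le) (sq_nonneg ρ),
      mul_nonneg (mul_nonneg hε.le (mul_nonneg hN0.le hN0.le)) hρ0.le,
      mul_nonneg (mul_nonneg (mul_nonneg hε.le hε.le) (mul_nonneg hN0.le hN0.le)) hρ0.le]
  have m0 : 0 ≤ ε * (N * (N - 1) / 2) * ρ ^ 2 := by
    nlinarith [mul_nonneg (mul_nonneg hε.le hN0.le) (sq_nonneg ρ)]
  have m2 : N * (t - t ^ 2 / 2 - ρ) ≤ (12/5) * N * ε ^ 2 * ρ := by
    nlinarith [mul_le_mul_of_nonneg_left hexu hN0.le,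
      mul_le_mul_of_nonneg_left ht3 hN0.le,
      mul_le_mul_of_nonneg_left hρ3 hN0.le]
  have m2' : -((12/5) * N * ε ^ 2 * ρ) ≤ N * (t - t ^ 2 / 2 - ρ) := by
    nlinarith [mul_le_mul_of_nonneg_left hexl hN0.le,
      mul_le_mul_of_nonneg_left ht3 hN0.le,
      mul_le_mul_of_nonneg_left hρ3 hN0.le]
  have m3 : N * (t ^ 2 - ρ ^ 2) ≤ (63/10) * N * ε ^ 2 * ρ := by
    have h := mul_le_mul_of_nonneg_left hts_ub hN0.le
    linarith [mul_le_mul_of_nonneg_left hρ3ε (mul_nonneg (mul_nonneg hN0.le hε.le) hρ0.le)]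
  have m3' : N * (ρ ^ 2 - t ^ 2) ≤ (54/5) * N ^ 2 * ε ^ 2 * ρ := by
    have h := mul_le_mul_of_nonneg_left hts_lb hN0.le
    linarith [mul_le_mul_of_nonneg_left hρ3 (mul_nonneg (mul_nonneg hN0.le hN0.le) (by norm_num : (0:ℝ) ≤ 6/5))]
  have m4' : 0 ≤ N * t - (1 + ε) * (N * ρ - (N * (N - 1) / 2) * ρ ^ 2) := by linarith
  have m4 := aux_m4 N t ρ ε hN2 hε hε20 hρ0 hρ3 hD2
  -- helper comparisons between powers of N
  have mN1 : N * ε ^ 2 * ρ ≤ (1/2) * N ^ 2 * ε ^ 2 * ρ := by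
    linarith [mul_nonneg (mul_nonneg (sq_nonneg ε) hρ0.le) (mul_nonneg hN0.le (by linarith : (0:ℝ) ≤ N - 2))]
  have mN2 : N ^ 2 * ε ^ 2 * ρ ≤ (1/2) * N ^ 3 * ε ^ 2 * ρ := by
    linarith [mul_nonneg (mul_nonneg (sq_nonneg ε) hρ0.le) (mul_nonneg (mul_nonneg hN0.le hN0.le) (by linarith : (0:ℝ) ≤ N - 2))]
  clear hD1 hD2 hexl hexu hts_ub hts_lb ht3 hρ2 hρ3 hNρ hP2 hρt2 hlow0 ht_le hρt ht0 hρ3ε hNε hε20 hN2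
  -- central identity
  have hid : N * ε * ρ - N ^ 2 / 2 * ρ ^ 2 =
      ε * (N * (N - 1) / 2) * ρ ^ 2
      - (N * t - (1 + ε) * (N * ρ - (N * (N - 1) / 2) * ρ ^ 2))
      + N * (t - t ^ 2 / 2 - ρ) + N * (t ^ 2 - ρ ^ 2) / 2 := by ring
  have cub : N * ε * ρ - N ^ 2 / 2 * ρ ^ 2 ≤ 8 * N ^ 3 * ε ^ 2 * ρ := by
    linarith [hid, m1, m2, m3, m4', mN1, mN2]
  have clb : N ^ 2 / 2 * ρ ^ 2 - N * ε * ρ ≤ 8 * N ^ 3 * ε ^ 2 * ρ := by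
    linarith [hid, m0, m2', m3', m4, mN1, mN2]
  clear hid m0 m1 m2 m2' m3 m3' m4 m4' mN1 mN2
  constructor
  · have h' : (N * ε - N ^ 2 / 2 * ρ) * ρ ≤ (8 * N ^ 3 * ε ^ 2) * ρ := by linarith [cub]
    exact le_of_mul_le_mul_right h' hρ0
  · have h' : (N ^ 2 / 2 * ρ - N * ε) * ρ ≤ (8 * N ^ 3 * ε ^ 2) * ρ := by linarith [clb]
    exact le_of_mul_le_mul_right h' hρ0

/-- Asymptotics of the positive fixed point near criticality: with `d = (1+ε)/(r-1)`,
any positive solution `ρ ∈ (0,1)` of `1 - ρ = exp(-d(1-(1-ρ)^(r-1)))` satisfies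
`ρ = 2ε/(r-1) + O(ε²)` and `ρ̂ = 1-(1-ρ)^(r-1) = 2ε + O(ε²)` as `ε → 0⁺`. -/
theorem rho_asymptotics (r : ℕ) (hr : 3 ≤ r) :
    ∃ C ε₀ : ℝ, 0 < C ∧ 0 < ε₀ ∧ ∀ ε : ℝ, 0 < ε → ε < ε₀ →
      ∀ ρ : ℝ, 0 < ρ → ρ < 1 →
        1 - ρ = Real.exp (-(((1 + ε) / ((r : ℝ) - 1)) * (1 - (1 - ρ) ^ (r - 1)))) →
        |ρ - 2 * ε / ((r : ℝ) - 1)| ≤ C * ε ^ 2 ∧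
        |(1 - (1 - ρ) ^ (r - 1)) - 2 * ε| ≤ C * ε ^ 2 := by
  have hr2 : (2:ℝ) ≤ (r:ℝ) - 1 := by
    have : (3:ℝ) ≤ (r:ℝ) := by exact_mod_cast hr
    linarith
  refine ⟨50 * ((r:ℝ) - 1) ^ 2, 1 / (10 * ((r:ℝ) - 1)), ?_, ?_, ?_⟩
  · nlinarith [hr2]
  · positivity
  intro ε hε hεlt ρ hρ0 hρ1 heq
  have h1r : 1 ≤ r := by omega
  have hcast : ((r:ℝ) - 1) = ((r - 1 : ℕ) : ℝ) := by
    rw [Nat.cast_sub h1r, Nat.cast_one]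
  rw [hcast] at heq hεlt ⊢
  set n : ℕ := r - 1 with hn
  set N : ℝ := (n : ℝ) with hNdef
  have hN2 : (2:ℝ) ≤ N := by rw [hcast] at hr2; exact hr2
  have hN0 : (0:ℝ) < N := by linarith
  -- smallness of ε
  have h10N : (0:ℝ) < 10 * N := by linarith
  have hεN : ε * (10 * N) < 1 := (lt_div_iff₀ h10N).mp (by rw [one_div] at hεlt ⊢; exact hεlt)
  have hNε : N * ε ≤ 1 / 10 := by nlinarith
  have hε20 : ε ≤ 1 / 20 := by nlinarith
  -- B and its bounds
  set B : ℝ := 1 - (1 - ρ) ^ n with hBdef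
  have hx0 : (0:ℝ) ≤ 1 - ρ := by linarith
  have hx1 : (1:ℝ) - ρ ≤ 1 := by linarith
  have hpow0 : (0:ℝ) ≤ (1 - ρ) ^ n := pow_nonneg hx0 n
  have hpow1 : (1 - ρ) ^ n ≤ 1 := pow_le_one₀ hx0 hx1
  have hB0 : 0 ≤ B := by rw [hBdef]; linarith
  have hB1 : B ≤ 1 := by rw [hBdef]; linarith
  have hBern : 1 - N * ρ ≤ (1 - ρ) ^ n := by
    have h := one_add_mul_le_pow (by linarith : (-2:ℝ) ≤ -ρ) n
    have h2 : (1 + -ρ) ^ n = (1 - ρ) ^ n := by ring_nf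
    rw [h2] at h
    rw [hNdef]; linarith
  have hB_ub : B ≤ N * ρ := by rw [hBdef]; linarith
  have hA := pow_one_sub_le n ρ hρ0.le (by linarith)
  rw [← hNdef] at hA
  have hB_lb : N * ρ - (N * (N - 1) / 2) * ρ ^ 2 ≤ B := by rw [hBdef]; linarith
  have hC := le_pow_one_sub n ρ hρ0.le (by linarith)
  rw [← hNdef] at hC
  have hB_ub3 : B ≤ N * ρ - (N * (N - 1) / 2) * ρ ^ 2 + (N * (N - 1) * (N - 2) / 6) * ρ ^ 3 := by
    rw [hBdef]; linarith
  -- t and its bounds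
  set t : ℝ := (1 + ε) / N * B with htdef
  have htN : N * t = (1 + ε) * B := by rw [htdef]; field_simp
  have ht0 : 0 ≤ t := mul_nonneg (div_nonneg (by linarith) hN0.le) hB0
  have ht55 : t ≤ 11/20 := by nlinarith [htN, mul_nonneg ht0 (by linarith : (0:ℝ) ≤ N - 2)]
  have ht_le : t ≤ (1 + ε) * ρ := by
    have h := mul_le_mul_of_nonneg_left hB_ub (by linarith : (0:ℝ) ≤ 1 + ε)
    have h2 : N * t ≤ N * ((1 + ε) * ρ) := by rw [htN]; linarith [h]; 
    exact le_of_mul_le_mul_left h2 hN0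
  -- heq now reads 1 - ρ = exp (-t)
  have hρt : ρ ≤ t := by
    have h := Real.add_one_le_exp (-t)
    rw [← heq] at h; linarith
  have hexp := exp_neg_quad t ht0 (by linarith)
  rw [← heq] at hexp
  obtain ⟨hexl, hexu⟩ := abs_le.mp hexp
  clear_value t B N n
  clear hexp heq hcast hεlt hA hC hBern hpow0 hpow1 hx0 hx1 hr2 h10N hεN hr h1r hn hNdef hBdef htdef
  -- a priori bound and central estimates
  have hD1 : (1 + ε) * (N * ρ - (N * (N - 1) / 2) * ρ ^ 2) ≤ N * t := by
    have h := mul_le_mul_of_nonneg_left hB_lb (by linarith : (0:ℝ) ≤ 1 + ε)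
    rw [htN]; linarith
  have hD2 : N * t ≤ (1 + ε) * (N * ρ - (N * (N - 1) / 2) * ρ ^ 2
      + (N * (N - 1) * (N - 2) / 6) * ρ ^ 3) := by
    have h := mul_le_mul_of_nonneg_left hB_ub3 (by linarith : (0:ℝ) ≤ 1 + ε)
    rw [htN]; linarith
  have hρ3ε : ρ ≤ 3 * ε := aux_apriori t ρ ε hε hρ0 ht0 ht55 hρt ht_le hexl
  obtain ⟨fu, fl⟩ := aux_central N t ρ ε hN2 hε hε20 hNε hρ0 hρ3ε ht0 hρt ht_le hD1 hD2 hexl hexu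
  clear hexl hexu hD1 hD2 htN ht55 ht0 hρt ht_le hB0 hB1 hρ1
  have hN0' : N ≠ 0 := ne_of_gt hN0
  have hρ2 : ρ ^ 2 ≤ 9 * ε ^ 2 := by nlinarith
  constructor
  · -- |ρ - 2ε/N| ≤ 50 N² ε²
    have habs : |N ^ 2 / 2 * ρ - N * ε| ≤ 8 * N ^ 3 * ε ^ 2 :=
      abs_le.mpr ⟨by linarith, by linarith⟩
    have hrepr : ρ - 2 * ε / N = 2 / N ^ 2 * (N ^ 2 / 2 * ρ - N * ε) := by
      field_simp
    have hnn : (0:ℝ) ≤ 2 / N ^ 2 := by positivity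
    rw [hrepr, abs_mul, abs_of_nonneg hnn]
    have h2 : 2 / N ^ 2 * |N ^ 2 / 2 * ρ - N * ε| ≤ 2 / N ^ 2 * (8 * N ^ 3 * ε ^ 2) :=
      mul_le_mul_of_nonneg_left habs hnn
    have h3 : 2 / N ^ 2 * (8 * N ^ 3 * ε ^ 2) = 16 * N * ε ^ 2 := by
      field_simp; ring
    have h4 : 16 * N * ε ^ 2 ≤ 50 * N ^ 2 * ε ^ 2 := by
      nlinarith [mul_nonneg (sq_nonneg ε) (mul_nonneg hN0.le (by linarith : (0:ℝ) ≤ N - 2))]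
    calc 2 / N ^ 2 * |N ^ 2 / 2 * ρ - N * ε| ≤ 2 / N ^ 2 * (8 * N ^ 3 * ε ^ 2) := h2
      _ = 16 * N * ε ^ 2 := h3
      _ ≤ 50 * N ^ 2 * ε ^ 2 := h4
  · -- |B - 2ε| ≤ 50 N² ε²
    have hrepr2 : N * ρ - 2 * ε = 2 / N * (N ^ 2 / 2 * ρ - N * ε) := by
      field_simp
    have habs : |N ^ 2 / 2 * ρ - N * ε| ≤ 8 * N ^ 3 * ε ^ 2 :=
      abs_le.mpr ⟨by linarith, by linarith⟩
    have hnn : (0:ℝ) ≤ 2 / N := by positivity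
    have habs2 : |N * ρ - 2 * ε| ≤ 16 * N ^ 2 * ε ^ 2 := by
      rw [hrepr2, abs_mul, abs_of_nonneg hnn]
      have h2 : 2 / N * |N ^ 2 / 2 * ρ - N * ε| ≤ 2 / N * (8 * N ^ 3 * ε ^ 2) :=
        mul_le_mul_of_nonneg_left habs hnn
      have h3 : 2 / N * (8 * N ^ 3 * ε ^ 2) = 16 * N ^ 2 * ε ^ 2 := by
        field_simp; ring
      linarith
    obtain ⟨hll, hlu⟩ := abs_le.mp habs2
    have hq0 : 0 ≤ (N * (N - 1) / 2) * ρ ^ 2 :=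
      mul_nonneg (div_nonneg (mul_nonneg hN0.le (by linarith)) (by norm_num)) (sq_nonneg ρ)
    have hq1 : (N * (N - 1) / 2) * ρ ^ 2 ≤ (9/2) * N ^ 2 * ε ^ 2 := by
      linarith [mul_nonneg (mul_nonneg hN0.le hN0.le) (by linarith : (0:ℝ) ≤ 9 * ε ^ 2 - ρ ^ 2),
        mul_nonneg hN0.le (sq_nonneg ρ)]
    have hcn : 0 ≤ N * (N - 1) * (N - 2) :=
      mul_nonneg (mul_nonneg hN0.le (by linarith)) (by linarith)
    have hco : N * (N - 1) * (N - 2) ≤ N ^ 3 := by nlinarith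
    have hρ3c : ρ ^ 3 ≤ 27 * ε ^ 3 := by
      nlinarith [pow_le_pow_left₀ hρ0.le hρ3ε 3]
    have hNe3 : N ^ 3 * ε ^ 3 ≤ (1/10) * N ^ 2 * ε ^ 2 := by
      linarith [mul_nonneg (by linarith : (0:ℝ) ≤ 1/10 - N * ε) (sq_nonneg (N * ε))]
    have hq3 : (N * (N - 1) * (N - 2) / 6) * ρ ^ 3 ≤ N ^ 2 * ε ^ 2 := by
      have e1 : (N * (N - 1) * (N - 2) / 6) * ρ ^ 3 ≤ (N ^ 3 / 6) * ρ ^ 3 := by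
        linarith [mul_nonneg (by linarith : (0:ℝ) ≤ N ^ 3 - N * (N - 1) * (N - 2))
          (pow_nonneg hρ0.le 3)]
      have e2 : (N ^ 3 / 6) * ρ ^ 3 ≤ (N ^ 3 / 6) * (27 * ε ^ 3) := by
        have := mul_le_mul_of_nonneg_left hρ3c (by positivity : (0:ℝ) ≤ N ^ 3 / 6)
        linarith
      linarith
    exact abs_le.mpr ⟨by linarith, by linarith⟩
end
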